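/- Let p ∈ (0,1). If λ ∈ (0,1) satisfies both λ < 1/(2−p) whenever λ ≥ p, and λ > p/(1+p) whenever λ < p, and this holds simultaneously for all p ∈ (0,1) (with λ constant), then λ = 1/2. -/

import Mathlib

theorem stmt_9 (l : ℝ) (hl : 0 < l) (hl1 : l < 1)
    (h : ∀ p : ℝ, 0 < p → p < 1 →
      (p ≤ l → l < 1 / (2 - p)) ∧ (l < p → l > p / (1 + p))) :
    l = 1 / 2 := by
  rcases lt_trichotomy l (1/2) with hlt | heq | hgt
  · -- l < 1/2: pick p = (l/(1-l) + 1)/2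
    exfalso
    have h1l : (0:ℝ) < 1 - l := by linarith
    set p : ℝ := (l / (1 - l) + 1) / 2 with hp
    have hll : l < l / (1 - l) := by
      rw [lt_div_iff₀ h1l]; nlinarith
    have hlt1 : l / (1 - l) < 1 := by
      rw [div_lt_one h1l]; linarith
    have hp0 : 0 < p := by rw [hp]; nlinarith
    have hp1 : p < 1 := by rw [hp]; linarith
    have hlp : l < p := by rw [hp]; linarith
    have := (h p hp0 hp1).2 hlp
    have h1p : (0:ℝ) < 1 + p := by linarith
    rw [gt_iff_lt, div_lt_iff₀ h1p] at this
    -- this : p < l * (1 + p), i.e. p(1-l) < l, i.e. p < l/(1-l); but p > l/(1-l)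
    have : p < l / (1 - l) := by rw [lt_div_iff₀ h1l]; nlinarith
    rw [hp] at this; linarith
  · exact heq
  · -- l > 1/2: pick p = (2l-1)/l
    exfalso
    set p : ℝ := (2*l - 1) / l with hp
    have hp0 : 0 < p := by rw [hp]; apply div_pos (by linarith) hl
    have hpl : p ≤ l := by
      rw [hp, div_le_iff₀ hl]; nlinarith
    have hp1 : p < 1 := lt_of_le_of_lt hpl hl1
    have := (h p hp0 hp1).1 hpl
    have h2p : 2 - p = 1 / l := by
      rw [hp]; field_simp; ring
    rw [h2p, one_div_one_div] at this
    linarith
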